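/- arXiv:0708.2828 — 4 statements merged into one kernel-verified Lean document; each statement's English description precedes it below -/
import Mathlib

section
/- Let a ≥ 0 and γ > a + 1. Suppose g and ζ are Lebesgue measurable on ℝ and |ζ(x)| ≤ C₁(1+|x|)^{-γ} for all x. Then for 1 ≤ q, (∫ |(g*ζ)(x)|^q (1+|x|)^{aq} dx)^{1/q} ≤ C·C₁ (∫ |g(x)|^q (1+|x|)^{aq} dx)^{1/q}, where C depends only on a, γ, q. -/
open MeasureTheory Real ENNReal
open scoped ENNReal


lemma key_tonelli (k : ℝ → ℝ≥0∞) (hk : Measurable k) (F : ℝ → ℝ≥0∞) (hF : Measurable F) :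
    (∫⁻ x : ℝ, ∫⁻ y : ℝ, F (x - y) * k y) = (∫⁻ y : ℝ, k y) * ∫⁻ x : ℝ, F x := by
  rw [lintegral_lintegral_swap]
  · have : ∀ y : ℝ, (∫⁻ x : ℝ, F (x - y) * k y) = (∫⁻ x : ℝ, F x) * k y := by
      intro y
      rw [lintegral_mul_const (f := fun x => F (x - y)) _
          (hF.comp (measurable_id.sub measurable_const)),
        lintegral_sub_right_eq_self F y]
    simp_rw [this]
    rw [lintegral_const_mul _ hk, mul_comm]
  · exact ((hF.comp (measurable_fst.sub measurable_snd)).mul (hk.comp measurable_snd)).aemeasurable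

lemma young_aux {q : ℝ} (hq : 1 ≤ q) (f k : ℝ → ℝ≥0∞) (hf : Measurable f) (hk : Measurable k) :
    (∫⁻ x : ℝ, (∫⁻ y : ℝ, f (x - y) * k y) ^ q) ^ (1 / q) ≤
      (∫⁻ y : ℝ, k y) * (∫⁻ x : ℝ, f x ^ q) ^ (1 / q) := by
  rcases eq_or_lt_of_le hq with hq1 | hq1
  · subst hq1
    simp only [ENNReal.rpow_one, one_div, inv_one]
    exact (key_tonelli k hk f hf).le
  · have hq0 : (0:ℝ) < q := by linarith
    have hpq : q.HolderConjugate q.conjExponent := Real.HolderConjugate.conjExponent hq1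
    set p := q.conjExponent with hp
    have hp0 : (0:ℝ) < p := hpq.symm.pos
    -- pointwise Hölder
    have holder : ∀ x : ℝ, (∫⁻ y : ℝ, f (x - y) * k y) ^ q ≤
        (∫⁻ y : ℝ, f (x - y) ^ q * k y) * (∫⁻ y : ℝ, k y) ^ (q / p) := by
      intro x
      have h1 : (∫⁻ y : ℝ, f (x - y) * k y) ≤
          (∫⁻ y : ℝ, f (x - y) ^ q * k y) ^ (1 / q) * (∫⁻ y : ℝ, k y) ^ (1 / p) := by
        have hfm : AEMeasurable (fun y : ℝ => f (x - y) * k y ^ (1/q)) :=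
          ((hf.comp (measurable_const.sub measurable_id)).mul (hk.pow_const _)).aemeasurable
        have hgm : AEMeasurable (fun y : ℝ => k y ^ (1/p)) := (hk.pow_const _).aemeasurable
        have := ENNReal.lintegral_mul_le_Lp_mul_Lq volume hpq hfm hgm
        have e1 : ∀ y : ℝ, (fun y => f (x - y) * k y ^ (1/q)) y * (fun y => k y ^ (1/p)) y
            = f (x - y) * k y := by
          intro y
          simp only
          rw [mul_assoc, ← ENNReal.rpow_add_of_nonneg _ _ (by positivity) (by positivity),
            one_div, one_div, hpq.inv_add_inv_eq_one, ENNReal.rpow_one]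
        have e2 : ∀ y : ℝ, ((fun y => f (x - y) * k y ^ (1/q)) y) ^ q = f (x - y) ^ q * k y := by
          intro y
          simp only
          rw [ENNReal.mul_rpow_of_nonneg _ _ hq0.le, ← ENNReal.rpow_mul,
            one_div, inv_mul_cancel₀ hq0.ne', ENNReal.rpow_one]
        have e3 : ∀ y : ℝ, ((fun y => k y ^ (1/p)) y) ^ p = k y := by
          intro y
          simp only
          rw [← ENNReal.rpow_mul, one_div, inv_mul_cancel₀ hp0.ne', ENNReal.rpow_one]
        calc (∫⁻ y : ℝ, f (x - y) * k y)
            = ∫⁻ y : ℝ, ((fun y => f (x - y) * k y ^ (1/q)) * (fun y => k y ^ (1/p))) y := by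
              simp_rw [Pi.mul_apply, e1]
          _ ≤ _ := by
              refine (ENNReal.lintegral_mul_le_Lp_mul_Lq volume hpq hfm hgm).trans_eq ?_
              congr 1
              · congr 1; exact lintegral_congr e2
              · congr 1; exact lintegral_congr e3
      calc (∫⁻ y : ℝ, f (x - y) * k y) ^ q
          ≤ ((∫⁻ y : ℝ, f (x - y) ^ q * k y) ^ (1 / q) * (∫⁻ y : ℝ, k y) ^ (1 / p)) ^ q :=
            ENNReal.rpow_le_rpow h1 hq0.le
        _ = (∫⁻ y : ℝ, f (x - y) ^ q * k y) * (∫⁻ y : ℝ, k y) ^ (q / p) := by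
            rw [ENNReal.mul_rpow_of_nonneg _ _ hq0.le, ← ENNReal.rpow_mul, ← ENNReal.rpow_mul,
              one_div, inv_mul_cancel₀ hq0.ne', ENNReal.rpow_one, one_div, inv_mul_eq_div]
    have main : (∫⁻ x : ℝ, (∫⁻ y : ℝ, f (x - y) * k y) ^ q) ≤
        (∫⁻ y : ℝ, k y) ^ (1 + q / p) * ∫⁻ x : ℝ, f x ^ q := by
      calc (∫⁻ x : ℝ, (∫⁻ y : ℝ, f (x - y) * k y) ^ q)
          ≤ ∫⁻ x : ℝ, (∫⁻ y : ℝ, f (x - y) ^ q * k y) * (∫⁻ y : ℝ, k y) ^ (q / p) :=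
            lintegral_mono holder
        _ = (∫⁻ x : ℝ, ∫⁻ y : ℝ, f (x - y) ^ q * k y) * (∫⁻ y : ℝ, k y) ^ (q / p) := by
            exact lintegral_mul_const _ (by
              apply Measurable.lintegral_prod_right (f := fun x y => f (x - y) ^ q * k y)
              exact (((hf.comp (measurable_fst.sub measurable_snd)).pow_const _).mul
                (hk.comp measurable_snd)))
        _ = (∫⁻ y : ℝ, k y) ^ (1 + q / p) * ∫⁻ x : ℝ, f x ^ q := by
            rw [key_tonelli k hk _ (hf.pow_const _)]
            rw [ENNReal.rpow_add_of_nonneg _ _ zero_le_one (by positivity), ENNReal.rpow_one]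
            ring
    calc (∫⁻ x : ℝ, (∫⁻ y : ℝ, f (x - y) * k y) ^ q) ^ (1 / q)
        ≤ ((∫⁻ y : ℝ, k y) ^ (1 + q / p) * ∫⁻ x : ℝ, f x ^ q) ^ (1 / q) :=
          ENNReal.rpow_le_rpow main (by positivity)
      _ = (∫⁻ y : ℝ, k y) * (∫⁻ x : ℝ, f x ^ q) ^ (1 / q) := by
          rw [ENNReal.mul_rpow_of_nonneg _ _ (by positivity), ← ENNReal.rpow_mul]
          have hqp : q / p = q - 1 := by
            rw [hp, Real.conjExponent]
            field_simp
          rw [hqp]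
          have : (1 + (q - 1)) * (1 / q) = 1 := by field_simp; ring
          rw [this, ENNReal.rpow_one]

/-- Weighted convolution inequality: if `|ζ(x)| ≤ C₁ (1+|x|)^(-γ)` with `γ > a+1`, then
`‖(g*ζ)·(1+|x|)^a‖_q ≤ C C₁ ‖g·(1+|x|)^a‖_q`, with `C = C(a,γ,q)`. -/
theorem stmt_0 (a γ q : ℝ) (ha : 0 ≤ a) (hγ : γ > a + 1) (hq : 1 ≤ q) :
    ∃ C : ℝ, 0 < C ∧
      ∀ (g ζ : ℝ → ℂ) (C₁ : ℝ), Measurable g → Measurable ζ →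
        (∀ x : ℝ, ‖ζ x‖ ≤ C₁ * (1 + |x|) ^ (-γ)) →
        (∫⁻ x : ℝ, ENNReal.ofReal (‖∫ y : ℝ, g (x - y) * ζ y‖ ^ q * (1 + |x|) ^ (a * q)))
            ^ (1 / q)
          ≤ ENNReal.ofReal (C * C₁) *
            (∫⁻ x : ℝ, ENNReal.ofReal (‖g x‖ ^ q * (1 + |x|) ^ (a * q))) ^ (1 / q) := by
  have hq0 : (0:ℝ) < q := by linarith
  set I : ℝ≥0∞ := ∫⁻ y : ℝ, ENNReal.ofReal ((1 + |y|) ^ (a - γ)) with hIdef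
  have hI : I < ⊤ := by
    have h := finite_integral_one_add_norm (E := ℝ) (μ := volume) (r := γ - a)
      (by simp; linarith)
    have : ∀ y : ℝ, (1 + |y|) ^ (a - γ) = (1 + ‖y‖) ^ (-(γ - a)) := by
      intro y; rw [Real.norm_eq_abs]; ring_nf
    rw [hIdef]
    simp_rw [this]
    exact h
  refine ⟨I.toReal + 1, by positivity, ?_⟩
  intro g ζ C₁ hg hζ hζb
  have hC₁ : 0 ≤ C₁ := by
    have h := hζb 0
    simp only [abs_zero, add_zero, Real.one_rpow] at h
    linarith [norm_nonneg (ζ 0)]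
  -- weight
  set W : ℝ → ℝ≥0∞ := fun t => ENNReal.ofReal ((1 + |t|) ^ a) with hWdef
  have hWm : Measurable W := by
    apply ENNReal.measurable_ofReal.comp
    exact ((continuous_const.add continuous_abs).rpow_const
      (fun x => Or.inl (show (1:ℝ) + |x| ≠ 0 by positivity))).measurable
  set f : ℝ → ℝ≥0∞ := fun t => (‖g t‖₊ : ℝ≥0∞) * W t with hfdef
  have hfm : Measurable f := (hg.nnnorm.coe_nnreal_ennreal).mul hWm
  set k : ℝ → ℝ≥0∞ := fun y => ENNReal.ofReal C₁ * ENNReal.ofReal ((1 + |y|) ^ (a - γ))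
    with hkdef
  have hkm : Measurable k := by
    apply Measurable.const_mul
    apply ENNReal.measurable_ofReal.comp
    exact ((continuous_const.add continuous_abs).rpow_const
      (fun x => Or.inl (show (1:ℝ) + |x| ≠ 0 by positivity))).measurable
  -- rewriting the weighted integrands
  have hrw : ∀ (c : ℝ) (x : ℝ), 0 ≤ c →
      ENNReal.ofReal (c ^ q * (1 + |x|) ^ (a * q)) =
        ((ENNReal.ofReal c) * W x) ^ q := by
    intro c x hc
    have h1 : (0:ℝ) < 1 + |x| := by positivity
    rw [ENNReal.ofReal_mul (by positivity), Real.rpow_mul h1.le,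
      ← ENNReal.ofReal_rpow_of_nonneg hc hq0.le,
      ← ENNReal.ofReal_rpow_of_nonneg (Real.rpow_nonneg h1.le a) hq0.le,
      ← ENNReal.mul_rpow_of_nonneg _ _ hq0.le]
  -- pointwise bound on the convolution
  have hpt : ∀ x : ℝ, (‖∫ y : ℝ, g (x - y) * ζ y‖₊ : ℝ≥0∞) * W x ≤
      ∫⁻ y : ℝ, f (x - y) * k y := by
    intro x
    have hmeas : Measurable fun y : ℝ => ((‖g (x - y) * ζ y‖₊ : ℝ≥0∞)) :=
      ((hg.comp (measurable_const.sub measurable_id)).mul hζ).nnnorm.coe_nnreal_ennreal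
    calc (‖∫ y : ℝ, g (x - y) * ζ y‖₊ : ℝ≥0∞) * W x
        ≤ (∫⁻ y : ℝ, (‖g (x - y) * ζ y‖₊ : ℝ≥0∞)) * W x :=
          mul_le_mul_left (enorm_integral_le_lintegral_enorm _) _
      _ = ∫⁻ y : ℝ, (‖g (x - y) * ζ y‖₊ : ℝ≥0∞) * W x := (lintegral_mul_const _ hmeas).symm
      _ ≤ ∫⁻ y : ℝ, f (x - y) * k y := by
          refine lintegral_mono fun y => ?_
          have h1 : (0:ℝ) < 1 + |x - y| := by positivity
          have h2 : (0:ℝ) < 1 + |y| := by positivity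
          have key : ‖ζ y‖ * (1 + |x|) ^ a ≤
              (C₁ * (1 + |y|) ^ (a - γ)) * (1 + |x - y|) ^ a := by
            have hsub : (1 + |x|) ^ a ≤ (1 + |x - y|) ^ a * (1 + |y|) ^ a := by
              rw [← Real.mul_rpow h1.le h2.le]
              apply Real.rpow_le_rpow (by positivity) _ ha
              have : |x| ≤ |x - y| + |y| := by
                calc |x| = |(x - y) + y| := by ring_nf
                  _ ≤ |x - y| + |y| := abs_add_le _ _
              nlinarith [abs_nonneg (x - y), abs_nonneg y]
            calc ‖ζ y‖ * (1 + |x|) ^ a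
                ≤ (C₁ * (1 + |y|) ^ (-γ)) * ((1 + |x - y|) ^ a * (1 + |y|) ^ a) := by
                  apply mul_le_mul (hζb y) hsub (by positivity)
                  have := (norm_nonneg (ζ y)).trans (hζb y)
                  positivity
              _ = (C₁ * (1 + |y|) ^ (a - γ)) * (1 + |x - y|) ^ a := by
                  rw [show a - γ = -γ + a by ring, Real.rpow_add h2]
                  ring
          calc (‖g (x - y) * ζ y‖₊ : ℝ≥0∞) * W x
              = (‖g (x - y)‖₊ : ℝ≥0∞) * ((‖ζ y‖₊ : ℝ≥0∞) * W x) := by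
                rw [nnnorm_mul]; push_cast; ring
            _ ≤ (‖g (x - y)‖₊ : ℝ≥0∞) *
                  (ENNReal.ofReal ((C₁ * (1 + |y|) ^ (a - γ)) * (1 + |x - y|) ^ a)) := by
                apply mul_le_mul_right
                rw [hWdef, ← enorm_eq_nnnorm, ← ofReal_norm_eq_enorm, ← ENNReal.ofReal_mul
                  (norm_nonneg _)]
                exact ENNReal.ofReal_le_ofReal key
            _ = f (x - y) * k y := by
                rw [hfdef, hkdef, hWdef, ENNReal.ofReal_mul (by
                    have := (norm_nonneg (ζ y)).trans (hζb y)
                    positivity),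
                  ENNReal.ofReal_mul hC₁]
                ring
  -- assemble
  calc (∫⁻ x : ℝ, ENNReal.ofReal (‖∫ y : ℝ, g (x - y) * ζ y‖ ^ q * (1 + |x|) ^ (a * q)))
          ^ (1 / q)
      = (∫⁻ x : ℝ, ((ENNReal.ofReal ‖∫ y : ℝ, g (x - y) * ζ y‖) * W x) ^ q) ^ (1 / q) := by
        congr 1
        exact lintegral_congr fun x => hrw _ x (norm_nonneg _)
    _ ≤ (∫⁻ x : ℝ, (∫⁻ y : ℝ, f (x - y) * k y) ^ q) ^ (1 / q) := by
        apply ENNReal.rpow_le_rpow _ (by positivity)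
        refine lintegral_mono fun x => ENNReal.rpow_le_rpow ?_ hq0.le
        rw [ofReal_norm_eq_enorm]
        exact hpt x
    _ ≤ (∫⁻ y : ℝ, k y) * (∫⁻ x : ℝ, f x ^ q) ^ (1 / q) := young_aux hq f k hfm hkm
    _ ≤ ENNReal.ofReal ((I.toReal + 1) * C₁) *
          (∫⁻ x : ℝ, ENNReal.ofReal (‖g x‖ ^ q * (1 + |x|) ^ (a * q))) ^ (1 / q) := by
        have e1 : (∫⁻ x : ℝ, f x ^ q) =
            ∫⁻ x : ℝ, ENNReal.ofReal (‖g x‖ ^ q * (1 + |x|) ^ (a * q)) := by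
          refine lintegral_congr fun x => ?_
          rw [hrw _ x (norm_nonneg _), ofReal_norm_eq_enorm, enorm_eq_nnnorm]
        rw [e1]
        apply mul_le_mul_left
        have e2 : (∫⁻ y : ℝ, k y) = ENNReal.ofReal C₁ * I := by
          rw [hkdef, hIdef]
          exact lintegral_const_mul _ (by
            apply ENNReal.measurable_ofReal.comp
            exact ((continuous_const.add continuous_abs).rpow_const
              (fun x => Or.inl (show (1:ℝ) + |x| ≠ 0 by positivity))).measurable)
        rw [e2, ENNReal.ofReal_mul (by positivity), mul_comm (ENNReal.ofReal (I.toReal + 1))]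
        apply mul_le_mul_right
        calc I = ENNReal.ofReal I.toReal := (ENNReal.ofReal_toReal hI.ne).symm
          _ ≤ ENNReal.ofReal (I.toReal + 1) := ENNReal.ofReal_le_ofReal (by linarith)
end

section
/- Let a ≥ 0, γ > a + 1, 1 ≤ q ≤ q₁ ≤ ∞, g, ζ measurable on ℝ with |ζ(x)| ≤ C₁(1+|x|)^{-γ}. Then (∫|(g*ζ)(x)|^{q₁}(1+|x|)^{aq₁}dx)^{1/q₁} ≤ C·C₁·(∫|g(x)|^q(1+|x|)^{aq}dx)^{1/q}, with the obvious essential-sup interpretation when q₁ = ∞. -/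
open MeasureTheory Real
open scoped ENNReal NNReal


lemma weight_submul {a : ℝ} (ha : 0 ≤ a) (x y : ℝ) :
    (1 + |x|) ^ a ≤ (1 + |x - y|) ^ a * (1 + |y|) ^ a := by
  rw [← Real.mul_rpow (by positivity) (by positivity)]
  apply Real.rpow_le_rpow (by positivity) _ ha
  have h : |x| ≤ |x - y| + |y| := by
    calc |x| = |(x - y) + y| := by ring_nf
    _ ≤ |x - y| + |y| := abs_add_le _ _
  nlinarith [mul_nonneg (abs_nonneg (x - y)) (abs_nonneg y)]

lemma lint_weight_lt_top {s : ℝ} (hs : 1 < s) :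
    ∫⁻ y : ℝ, ENNReal.ofReal ((1 + |y|) ^ (-s)) < ⊤ := by
  have hint : Integrable (fun y : ℝ => (1 + ‖y‖) ^ (-s)) :=
    integrable_one_add_norm (by simpa using hs)
  have := hint.hasFiniteIntegral
  rw [HasFiniteIntegral] at this
  refine lt_of_eq_of_lt ?_ this
  refine lintegral_congr fun y => ?_
  rw [Real.enorm_eq_ofReal (by positivity), Real.norm_eq_abs]


lemma young_lt_top {F W : ℝ → ℝ≥0∞} (hF : Measurable F) (hW : Measurable W)
    {q t : ℝ} (hq : 1 ≤ q) (hqt : q ≤ t) :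
    ∫⁻ x : ℝ, (∫⁻ y : ℝ, F (x - y) * W y) ^ t
      ≤ (∫⁻ u : ℝ, F u ^ q) ^ (t / q) *
        (∫⁻ y : ℝ, W y ^ ((1 - 1/q + 1/t)⁻¹)) ^ (t * (1 - 1/q + 1/t)) := by
  have hq0 : 0 < q := lt_of_lt_of_le one_pos hq
  have ht0 : 0 < t := lt_of_lt_of_le hq0 hqt
  set e1 : ℝ := 1/t with he1def
  set e2 : ℝ := 1/q - 1/t with he2def
  set e3 : ℝ := 1 - 1/q with he3def
  have he1 : 0 < e1 := by positivity
  have he2 : 0 ≤ e2 := by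
    have := one_div_le_one_div_of_le hq0 hqt
    simp only [he2def]; linarith
  have he3 : 0 ≤ e3 := by
    have : 1/q ≤ 1 := by rw [div_le_one hq0]; exact hq
    simp only [he3def]; linarith
  have hsum : e1 + e2 + e3 = 1 := by simp only [he1def, he2def, he3def]; ring
  have hρpos : 0 < 1 - 1/q + 1/t := by
    have h1 : (0:ℝ) < 1/t := by positivity
    have h2 : 1/q ≤ 1 := by rw [div_le_one hq0]; exact hq
    linarith
  set ρ : ℝ := (1 - 1/q + 1/t)⁻¹ with hρdef
  have hρ0 : 0 < ρ := by positivity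
  set I : ℝ≥0∞ := ∫⁻ u : ℝ, F u ^ q with hIdef
  set D : ℝ≥0∞ := ∫⁻ y : ℝ, W y ^ ρ with hDdef
  have hFq : Measurable fun u => F u ^ q := ENNReal.continuous_rpow_const.measurable.comp hF
  have hWρ : Measurable fun y => W y ^ ρ := ENNReal.continuous_rpow_const.measurable.comp hW
  -- the inner function and its properties
  set H : ℝ → ℝ → ℝ≥0∞ := fun x y => F (x - y) ^ q * W y ^ ρ with hHdef
  have hHmeas : Measurable (Function.uncurry H) := by
    apply Measurable.mul
    · exact (ENNReal.continuous_rpow_const.measurable.comp hF).comp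
        (measurable_fst.sub measurable_snd)
    · exact hWρ.comp measurable_snd
  set A : ℝ → ℝ≥0∞ := fun x => ∫⁻ y, H x y with hAdef
  have hAmeas : Measurable A := hHmeas.lintegral_prod_right'
  -- translation invariance facts
  have htransF : ∀ x : ℝ, (∫⁻ y, F (x - y) ^ q) = I := by
    intro x
    exact (Measure.measurePreserving_sub_left volume x).lintegral_comp hFq
  -- step 1: Hölder per x
  have holder : ∀ x : ℝ, (∫⁻ y, F (x - y) * W y) ≤ A x ^ e1 * I ^ e2 * D ^ e3 := by
    intro x
    have key : ∀ B C : ℝ≥0∞, B * C = (B ^ q * C ^ ρ) ^ e1 * ((B ^ q) ^ e2 * (C ^ ρ) ^ e3) := by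
      intro B C
      rw [ENNReal.mul_rpow_of_nonneg _ _ he1.le,
        ← ENNReal.rpow_mul, ← ENNReal.rpow_mul, ← ENNReal.rpow_mul, ← ENNReal.rpow_mul]
      have : B ^ (q * e1) * C ^ (ρ * e1) * (B ^ (q * e2) * C ^ (ρ * e3))
          = (B ^ (q * e1) * B ^ (q * e2)) * (C ^ (ρ * e1) * C ^ (ρ * e3)) := by ring
      rw [this, ← ENNReal.rpow_add_of_nonneg _ _ (by positivity) (by positivity),
        ← ENNReal.rpow_add_of_nonneg _ _ (by positivity) (by positivity)]
      have hb : q * e1 + q * e2 = 1 := by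
        have h : q * e1 + q * e2 = q * (1/q) := by simp only [he1def, he2def]; ring
        rw [h, mul_one_div, div_self hq0.ne']
      have hc : ρ * e1 + ρ * e3 = 1 := by
        have : ρ * e1 + ρ * e3 = ρ * (e1 + e3) := by ring
        rw [this]
        have : e1 + e3 = 1 - 1/q + 1/t := by simp only [he1def, he3def]; ring
        rw [this, hρdef, inv_mul_cancel₀ (ne_of_gt hρpos)]
      rw [hb, hc, ENNReal.rpow_one, ENNReal.rpow_one]
    calc (∫⁻ y, F (x - y) * W y)
        = ∫⁻ y, (F (x - y) ^ q * W y ^ ρ) ^ e1 *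
            ((F (x - y) ^ q) ^ e2 * (W y ^ ρ) ^ e3) := by
          refine lintegral_congr fun y => key _ _
      _ ≤ (∫⁻ y, F (x - y) ^ q * W y ^ ρ) ^ e1 *
            ((∫⁻ y, F (x - y) ^ q) ^ e2 * (∫⁻ y, W y ^ ρ) ^ e3) := by
          have hh := ENNReal.lintegral_prod_norm_pow_le (μ := (volume : Measure ℝ))
            (Finset.univ : Finset (Fin 3))
            (f := ![fun y => F (x - y) ^ q * W y ^ ρ, fun y => F (x - y) ^ q,
              fun y => W y ^ ρ])
            (p := ![e1, e2, e3])
            (fun i _ => by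
              fin_cases i
              · exact (((ENNReal.continuous_rpow_const.measurable.comp hF).comp
                  (measurable_const.sub measurable_id)).mul hWρ).aemeasurable
              · exact ((ENNReal.continuous_rpow_const.measurable.comp hF).comp
                  (measurable_const.sub measurable_id)).aemeasurable
              · exact hWρ.aemeasurable)
            (by simp [Fin.sum_univ_three]; linarith)
            (fun i _ => by fin_cases i <;> simp [he1.le, he2, he3])
          simpa [Fin.prod_univ_three, mul_assoc] using hh
      _ = A x ^ e1 * I ^ e2 * D ^ e3 := by
          rw [htransF x, mul_assoc]
  -- integral of A
  have hAint : (∫⁻ x, A x) = I * D := by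
    rw [hAdef]
    rw [lintegral_lintegral_swap hHmeas.aemeasurable]
    have inner : ∀ y : ℝ, (∫⁻ x, H x y) = I * W y ^ ρ := by
      intro y
      simp only [hHdef]
      rw [lintegral_mul_const'' (W y ^ ρ)
        (f := fun x => F (x - y) ^ q) ((hFq.comp (measurable_sub_const y)).aemeasurable)]
      congr 1
      exact lintegral_sub_right_eq_self (fun u => F u ^ q) y
    calc (∫⁻ y, ∫⁻ x, H x y) = ∫⁻ y, I * W y ^ ρ := lintegral_congr inner
      _ = ∫⁻ y, W y ^ ρ * I := by simp [mul_comm]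
      _ = D * I := lintegral_mul_const'' _ hWρ.aemeasurable
      _ = I * D := mul_comm _ _
  have he1t : e1 * t = 1 := by
    rw [he1def]; field_simp
  calc ∫⁻ x : ℝ, (∫⁻ y : ℝ, F (x - y) * W y) ^ t
      ≤ ∫⁻ x, A x * (I ^ e2 * D ^ e3) ^ t := by
        refine lintegral_mono fun x => ?_
        calc (∫⁻ y : ℝ, F (x - y) * W y) ^ t
            ≤ (A x ^ e1 * I ^ e2 * D ^ e3) ^ t := ENNReal.rpow_le_rpow (holder x) ht0.le
          _ = A x * (I ^ e2 * D ^ e3) ^ t := by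
              rw [mul_assoc, ENNReal.mul_rpow_of_nonneg _ _ ht0.le, ← ENNReal.rpow_mul,
                he1t, ENNReal.rpow_one]
    _ = (I * D) * (I ^ e2 * D ^ e3) ^ t := by
        rw [lintegral_mul_const'' _ hAmeas.aemeasurable, hAint]
    _ = (I * I ^ (e2 * t)) * (D * D ^ (e3 * t)) := by
        rw [ENNReal.mul_rpow_of_nonneg _ _ ht0.le, ← ENNReal.rpow_mul, ← ENNReal.rpow_mul]
        ring
    _ = I ^ (t / q) * D ^ (t * (1 - 1/q + 1/t)) := by
        congr 1
        · nth_rewrite 1 [← ENNReal.rpow_one I]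
          rw [← ENNReal.rpow_add_of_nonneg _ _ zero_le_one (by positivity)]
          congr 1
          rw [he2def]
          field_simp
          ring
        · nth_rewrite 1 [← ENNReal.rpow_one D]
          rw [← ENNReal.rpow_add_of_nonneg _ _ zero_le_one (by positivity)]
          congr 1
          rw [he3def]
          field_simp
          ring


lemma young_top {F W : ℝ → ℝ≥0∞} (hF : Measurable F) (hW : Measurable W)
    (hW1 : ∀ y, W y ≤ 1) {q : ℝ} (hq : 1 ≤ q) (x : ℝ) :
    (∫⁻ y : ℝ, F (x - y) * W y)
      ≤ (∫⁻ u : ℝ, F u ^ q) ^ (1/q) * (∫⁻ y : ℝ, W y ^ ((1 - 1/q)⁻¹)) ^ (1 - 1/q) := by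
  have hq0 : 0 < q := lt_of_lt_of_le one_pos hq
  set ρ : ℝ := (1 - 1/q)⁻¹ with hρdef
  have he3 : 0 ≤ 1 - 1/q := by
    have : 1/q ≤ 1 := by rw [div_le_one hq0]; exact hq
    linarith
  have hsum : 1/q + (1 - 1/q) = 1 := by ring
  have hFmeas : AEMeasurable (fun y : ℝ => F (x - y) ^ q) volume :=
    ((ENNReal.continuous_rpow_const.measurable.comp hF).comp
      (measurable_const.sub measurable_id)).aemeasurable
  have hWmeas : AEMeasurable (fun y : ℝ => W y ^ ρ) volume :=
    (ENNReal.continuous_rpow_const.measurable.comp hW).aemeasurable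
  calc (∫⁻ y : ℝ, F (x - y) * W y)
      ≤ ∫⁻ y : ℝ, (F (x - y) ^ q) ^ (1/q) * (W y ^ ρ) ^ (1 - 1/q) := by
        refine lintegral_mono fun y => ?_
        have h1 : (F (x - y) ^ q) ^ (1/q) = F (x - y) := by
          rw [← ENNReal.rpow_mul, mul_one_div, div_self hq0.ne', ENNReal.rpow_one]
        rw [h1]
        refine mul_le_mul_right ?_ _
        rcases eq_or_lt_of_le hq with hq1 | hq1
        · have : 1 - 1/q = 0 := by rw [← hq1]; norm_num
          rw [this, ENNReal.rpow_zero]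
          exact hW1 y
        · have hne : 1 - 1/q ≠ 0 := by
            have : 1/q < 1 := by rw [div_lt_one hq0]; exact hq1
            linarith
          rw [← ENNReal.rpow_mul, hρdef, inv_mul_cancel₀ hne, ENNReal.rpow_one]
    _ ≤ (∫⁻ y : ℝ, F (x - y) ^ q) ^ (1/q) * (∫⁻ y : ℝ, W y ^ ρ) ^ (1 - 1/q) :=
        ENNReal.lintegral_mul_norm_pow_le hFmeas hWmeas (by positivity) he3 hsum
    _ = (∫⁻ u : ℝ, F u ^ q) ^ (1/q) * (∫⁻ y : ℝ, W y ^ ρ) ^ (1 - 1/q) := by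
        congr 1
        congr 1
        exact (Measure.measurePreserving_sub_left volume x).lintegral_comp
          (ENNReal.continuous_rpow_const.measurable.comp hF)

/-- Weighted convolution inequality with a gain of integrability: for `a ≥ 0`, `γ > a+1`,
`1 ≤ q ≤ q₁ ≤ ∞` and `|ζ(x)| ≤ C₁(1+|x|)^(-γ)`,
`‖(g*ζ)(x)(1+|x|)^a‖_{q₁} ≤ C C₁ ‖g(x)(1+|x|)^a‖_q`, where for `q₁ = ∞` the left-hand
side is the essential supremum (this is built into `eLpNorm`). -/
theorem stmt_1 (a γ q : ℝ) (q₁ : ENNReal) (ha : 0 ≤ a) (hγ : γ > a + 1) (hq : 1 ≤ q)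
    (hqq₁ : ENNReal.ofReal q ≤ q₁) :
    ∃ C : ℝ, 0 < C ∧
      ∀ (g ζ : ℝ → ℂ) (C₁ : ℝ), Measurable g → Measurable ζ →
        (∀ x : ℝ, ‖ζ x‖ ≤ C₁ * (1 + |x|) ^ (-γ)) →
        eLpNorm (fun x : ℝ => (1 + |x|) ^ a * ‖∫ y : ℝ, g (x - y) * ζ y‖) q₁ volume
          ≤ ENNReal.ofReal (C * C₁) *
            eLpNorm (fun x : ℝ => (1 + |x|) ^ a * ‖g x‖) (ENNReal.ofReal q) volume := by
  have hq0 : 0 < q := lt_of_lt_of_le one_pos hq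
  have hγa : 1 < γ - a := by linarith
  -- exponents
  set σ : ℝ := if q₁ = ⊤ then 1 - 1/q else 1 - 1/q + 1/q₁.toReal with hσdef
  set ρ : ℝ := σ⁻¹ with hρdef
  have h1q : 1/q ≤ 1 := by rw [div_le_one hq0]; exact hq
  have hq₁0 : q₁ ≠ 0 := by
    intro h
    rw [h, nonpos_iff_eq_zero, ENNReal.ofReal_eq_zero] at hqq₁
    linarith
  have hqt : q₁ ≠ ⊤ → q ≤ q₁.toReal := by
    intro h
    have := ENNReal.toReal_mono h hqq₁
    rwa [ENNReal.toReal_ofReal hq0.le] at this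
  have hσ0 : 0 ≤ σ := by
    rw [hσdef]
    split_ifs with h
    · linarith
    · have h2 : 0 < q₁.toReal := lt_of_lt_of_le hq0 (hqt h)
      have : 0 < 1/q₁.toReal := by positivity
      linarith
  have hσ1 : σ ≤ 1 := by
    rw [hσdef]
    split_ifs with h
    · have : 0 < 1/q := by positivity
      linarith
    · have hle := hqt h
      have : 1/q₁.toReal ≤ 1/q := by
        apply one_div_le_one_div_of_le hq0 hle
      linarith
  -- the weight functions
  set W : ℝ → ℝ≥0∞ := fun y => ENNReal.ofReal ((1 + |y|) ^ (a - γ)) with hWdef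
  have hWmeas : Measurable W := by
    apply Measurable.ennreal_ofReal
    exact ((continuous_const.add continuous_abs).rpow_const
      (fun x => Or.inl (by show (1:ℝ) + |x| ≠ 0; positivity))).measurable
  have hW1 : ∀ y, W y ≤ 1 := by
    intro y
    rw [hWdef]
    exact ENNReal.ofReal_le_one.mpr
      (Real.rpow_le_one_of_one_le_of_nonpos (by simp [abs_nonneg]) (by linarith))
  set D : ℝ≥0∞ := ∫⁻ y : ℝ, W y ^ ρ with hDdef
  -- D^σ is finite
  have hE : D ^ σ ≠ ⊤ := by
    rcases eq_or_lt_of_le hσ0 with h0 | hpos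
    · rw [← h0, ENNReal.rpow_zero]; exact ENNReal.one_ne_top
    · have hρ1 : 1 ≤ ρ := by
        rw [hρdef]
        exact (one_le_inv_iff₀.mpr ⟨hpos, hσ1⟩)
      have hDfin : D ≠ ⊤ := by
        have heq : D = ∫⁻ y : ℝ, ENNReal.ofReal ((1 + |y|) ^ (-((γ - a) * ρ))) := by
          refine lintegral_congr fun y => ?_
          simp only [hWdef]
          rw [ENNReal.ofReal_rpow_of_pos (by positivity), ← Real.rpow_mul (by positivity)]
          congr 1
          ring
        rw [heq]
        exact (lint_weight_lt_top (by nlinarith)).ne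
      exact ENNReal.rpow_ne_top_of_nonneg hσ0 hDfin
  refine ⟨(D ^ σ).toReal + 1, by positivity, ?_⟩
  set C : ℝ := (D ^ σ).toReal + 1 with hCdef
  have hC : 0 < C := by positivity
  have hDC : D ^ σ ≤ ENNReal.ofReal C := by
    rw [← ENNReal.ofReal_toReal hE]
    exact ENNReal.ofReal_le_ofReal (by rw [hCdef]; linarith)
  intro g ζ C₁ hg hζmeas hζ
  have hC₁ : 0 ≤ C₁ := by
    have h0 := hζ 0
    simp only [abs_zero, add_zero, Real.one_rpow, mul_one] at h0
    linarith [norm_nonneg (ζ 0)]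
  -- F
  set F : ℝ → ℝ≥0∞ := fun u => ENNReal.ofReal ((1 + |u|) ^ a * ‖g u‖) with hFdef
  have hwmeas : Measurable fun u : ℝ => (1 + |u|) ^ a :=
    ((continuous_const.add continuous_abs).rpow_const
      (fun x => Or.inl (by show (1:ℝ) + |x| ≠ 0; positivity))).measurable
  have hFmeas : Measurable F := (hwmeas.mul hg.norm).ennreal_ofReal
  set I : ℝ≥0∞ := ∫⁻ u : ℝ, F u ^ q with hIdef
  -- pointwise bound
  have hpt : ∀ x : ℝ,
      (‖(1 + |x|) ^ a * ‖∫ y : ℝ, g (x - y) * ζ y‖‖₊ : ℝ≥0∞)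
        ≤ ENNReal.ofReal C₁ * ∫⁻ y : ℝ, F (x - y) * W y := by
    intro x
    have step1 : (‖(1 + |x|) ^ a * ‖∫ y : ℝ, g (x - y) * ζ y‖‖₊ : ℝ≥0∞)
        = ENNReal.ofReal ((1 + |x|) ^ a) * (‖∫ y : ℝ, g (x - y) * ζ y‖₊ : ℝ≥0∞) := by
      rw [← enorm_eq_nnnorm, Real.enorm_eq_ofReal (by positivity), ENNReal.ofReal_mul (by positivity)]
      congr 1
      exact ofReal_norm _
    rw [step1]
    calc ENNReal.ofReal ((1 + |x|) ^ a) * (‖∫ y : ℝ, g (x - y) * ζ y‖₊ : ℝ≥0∞)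
        ≤ ENNReal.ofReal ((1 + |x|) ^ a) * ∫⁻ y : ℝ, (‖g (x - y)‖₊ : ℝ≥0∞) * ‖ζ y‖₊ := by
          refine mul_le_mul_right ?_ _
          refine le_trans (enorm_integral_le_lintegral_enorm _) ?_
          refine le_of_eq (lintegral_congr fun y => ?_)
          rw [enorm_eq_nnnorm, nnnorm_mul, ENNReal.coe_mul]
      _ = ∫⁻ y : ℝ, ENNReal.ofReal ((1 + |x|) ^ a) * ((‖g (x - y)‖₊ : ℝ≥0∞) * ‖ζ y‖₊) :=
          (lintegral_const_mul' _ _ ENNReal.ofReal_ne_top).symm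
      _ ≤ ENNReal.ofReal C₁ * ∫⁻ y : ℝ, F (x - y) * W y := by
          rw [← lintegral_const_mul' _ _ ENNReal.ofReal_ne_top]
          refine lintegral_mono fun y => ?_
          have lhs_eq : ENNReal.ofReal ((1 + |x|) ^ a) * ((‖g (x - y)‖₊ : ℝ≥0∞) * ‖ζ y‖₊)
              = ENNReal.ofReal ((1 + |x|) ^ a * (‖g (x - y)‖ * ‖ζ y‖)) := by
            rw [ENNReal.ofReal_mul (by positivity), ENNReal.ofReal_mul (norm_nonneg _),
              ofReal_norm, ofReal_norm, enorm_eq_nnnorm, enorm_eq_nnnorm]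
          have rhs_eq : ENNReal.ofReal C₁ * (F (x - y) * W y)
              = ENNReal.ofReal (C₁ * ((1 + |x - y|) ^ a * ‖g (x - y)‖ * (1 + |y|) ^ (a - γ))) := by
            simp only [hFdef, hWdef]
            rw [← ENNReal.ofReal_mul (by positivity), ← ENNReal.ofReal_mul hC₁]
          rw [lhs_eq, rhs_eq]
          apply ENNReal.ofReal_le_ofReal
          have key : (1 + |x|) ^ a * (‖g (x - y)‖ * ‖ζ y‖)
              ≤ ((1 + |x - y|) ^ a * (1 + |y|) ^ a) * (‖g (x - y)‖ * (C₁ * (1 + |y|) ^ (-γ))) := by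
            apply mul_le_mul (weight_submul ha x y)
              (mul_le_mul_of_nonneg_left (hζ y) (norm_nonneg _)) (by positivity) (by positivity)
          refine le_trans key (le_of_eq ?_)
          have hmerge : (1 + |y|) ^ a * (1 + |y|) ^ (-γ) = (1 + |y|) ^ (a - γ) := by
            rw [← Real.rpow_add (by positivity), sub_eq_add_neg]
          calc ((1 + |x - y|) ^ a * (1 + |y|) ^ a) * (‖g (x - y)‖ * (C₁ * (1 + |y|) ^ (-γ)))
              = C₁ * ((1 + |x - y|) ^ a * ‖g (x - y)‖ * ((1 + |y|) ^ a * (1 + |y|) ^ (-γ))) := by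
                ring
            _ = C₁ * ((1 + |x - y|) ^ a * ‖g (x - y)‖ * (1 + |y|) ^ (a - γ)) := by rw [hmerge]
  -- the RHS norm
  have hRHS : eLpNorm (fun x : ℝ => (1 + |x|) ^ a * ‖g x‖) (ENNReal.ofReal q) volume
      = I ^ (1/q) := by
    have hofq0 : ENNReal.ofReal q ≠ 0 := by
      rw [Ne, ENNReal.ofReal_eq_zero]; linarith
    rw [eLpNorm_eq_lintegral_rpow_enorm_toReal hofq0 ENNReal.ofReal_ne_top,
      ENNReal.toReal_ofReal hq0.le]
    congr 1
    refine lintegral_congr fun x => ?_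
    congr 1
    rw [hFdef, Real.enorm_eq_ofReal (by positivity)]
  rw [hRHS]
  -- the final bounding step
  have hfinal : ∀ X : ℝ≥0∞, ENNReal.ofReal C₁ * (X * D ^ σ)
      ≤ ENNReal.ofReal (C * C₁) * X := by
    intro X
    calc ENNReal.ofReal C₁ * (X * D ^ σ) = ENNReal.ofReal C₁ * X * D ^ σ := by ring
      _ ≤ ENNReal.ofReal C₁ * X * ENNReal.ofReal C := mul_le_mul_right hDC _
      _ = ENNReal.ofReal (C * C₁) * X := by
          rw [ENNReal.ofReal_mul hC.le]; ring
  by_cases htop : q₁ = ⊤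
  · -- essential supremum case
    have hσtop : σ = 1 - 1/q := by rw [hσdef, if_pos htop]
    rw [htop, eLpNorm_exponent_top, eLpNormEssSup]
    have hbd : ∀ x : ℝ, (‖(1 + |x|) ^ a * ‖∫ y : ℝ, g (x - y) * ζ y‖‖₊ : ℝ≥0∞)
        ≤ ENNReal.ofReal C₁ * (I ^ (1/q) * D ^ σ) := by
      intro x
      refine le_trans (hpt x) (mul_le_mul_right ?_ _)
      have hy := young_top hFmeas hWmeas hW1 hq x
      rw [← hIdef] at hy
      refine le_trans hy (le_of_eq ?_)
      rw [hσtop, hDdef, hρdef, hσtop]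
    exact le_trans (essSup_le_of_ae_le _ (Filter.Eventually.of_forall hbd)) (hfinal _)
  · -- finite case
    set t : ℝ := q₁.toReal with htdef
    have ht : q ≤ t := hqt htop
    have ht0 : 0 < t := lt_of_lt_of_le hq0 ht
    have hσfin : σ = 1 - 1/q + 1/t := by rw [hσdef, if_neg htop]
    rw [eLpNorm_eq_lintegral_rpow_enorm_toReal hq₁0 htop]
    calc (∫⁻ x : ℝ, (‖(1 + |x|) ^ a * ‖∫ y : ℝ, g (x - y) * ζ y‖‖₊ : ℝ≥0∞) ^ q₁.toReal)
          ^ (1 / q₁.toReal)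
        ≤ (∫⁻ x : ℝ, (ENNReal.ofReal C₁ * ∫⁻ y : ℝ, F (x - y) * W y) ^ t) ^ (1/t) := by
          refine ENNReal.rpow_le_rpow ?_ (by positivity)
          exact lintegral_mono fun x => ENNReal.rpow_le_rpow (hpt x) ht0.le
      _ = ((ENNReal.ofReal C₁) ^ t * ∫⁻ x : ℝ, (∫⁻ y : ℝ, F (x - y) * W y) ^ t) ^ (1/t) := by
          congr 1
          rw [← lintegral_const_mul' _ _ (ENNReal.rpow_ne_top_of_nonneg ht0.le
            ENNReal.ofReal_ne_top)]
          exact lintegral_congr fun x => ENNReal.mul_rpow_of_nonneg _ _ ht0.le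
      _ ≤ ((ENNReal.ofReal C₁) ^ t * (I ^ (t/q) * D ^ (t * σ))) ^ (1/t) := by
          refine ENNReal.rpow_le_rpow (mul_le_mul_right ?_ _) (by positivity)
          have := young_lt_top hFmeas hWmeas hq ht
          rw [← hIdef] at this
          refine le_trans this (le_of_eq ?_)
          rw [hDdef, hρdef, hσfin]
      _ = ENNReal.ofReal C₁ * (I ^ (1/q) * D ^ σ) := by
          rw [ENNReal.mul_rpow_of_nonneg _ _ (by positivity),
            ENNReal.mul_rpow_of_nonneg _ _ (by positivity),
            ← ENNReal.rpow_mul, ← ENNReal.rpow_mul, ← ENNReal.rpow_mul]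
          congr 2
          · rw [mul_one_div, div_self ht0.ne', ENNReal.rpow_one]
          · congr 1; field_simp
          · congr 1; field_simp
      _ ≤ ENNReal.ofReal (C * C₁) * I ^ (1/q) := hfinal _
end

section
/- Let d ≥ 1, N > 0, and suppose k : ℝ → ℂ satisfies |k(x)| ≤ C for all x. Then for 1 ≤ q ≤ 2, (∫₀^∞ (∫_{-∞}^∞ (1+|u|)^{-N}|f(r+u)|(r+u)^{d-1}(1+|r+u|)^{-(d-1)/2} 1_{r+u>0} du)^q (1+r)^{(d-1)(1-q/2)} dr)^{1/q} ≤ C' ‖f‖_{L^q((0,∞), s^{d-1}ds)}, provided N > (d-1)(1-q/2) + 1. -/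
open MeasureTheory Set Real
open scoped ENNReal

/-- Pointwise real inequality: the kernel with weights is dominated by the
simplified convolution kernel. -/
lemma stmt7_key (d N q : ℝ) (hd : 1 ≤ d) (hq1 : 1 ≤ q) (hq2 : q ≤ 2)
    (r u m : ℝ) (hr : 0 < r) (hm : 0 ≤ m) :
    (1 + |u|) ^ (-N) * m * (r + u) ^ (d - 1) *
        (1 + |r + u|) ^ (-((d - 1) / 2)) * (if 0 < r + u then (1:ℝ) else 0) *
        (1 + r) ^ ((d - 1) * (1 - q / 2) / q)
      ≤ (1 + |u|) ^ (-(N - (d - 1) * (1 - q / 2) / q)) *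
        (m * (r + u) ^ ((d - 1) / q) * (if 0 < r + u then (1:ℝ) else 0)) := by
  have hq0 : (0:ℝ) < q := by linarith
  set a : ℝ := (d - 1) * (1 - q / 2) with ha
  have ha0 : 0 ≤ a := mul_nonneg (by linarith) (by linarith)
  have haq0 : 0 ≤ a / q := div_nonneg ha0 hq0.le
  by_cases hs : 0 < r + u
  · simp only [if_pos hs, mul_one]
    set s : ℝ := r + u with hsdef
    have habs : |s| = s := abs_of_pos hs
    rw [habs]
    have hu0 : (0:ℝ) < 1 + |u| := by positivity
    have hs1 : (0:ℝ) < 1 + s := by linarith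
    have h1q : 0 ≤ 1 - 1/q := by
      have h : 1/q ≤ 1 := by rw [div_le_one hq0]; linarith
      linarith
    set A : ℝ := (1 + |u|) ^ (-N) with hA
    set B : ℝ := (1 + s) ^ (-((d - 1) / 2)) with hB
    set c : ℝ := (1 + r) ^ (a / q) with hc
    set P : ℝ := s ^ ((d - 1) / q) with hP
    have hXY : A * s ^ (d - 1) * B * c ≤ (1 + |u|) ^ (-(N - a / q)) * P := by
      have e1 : s ^ (d - 1) = P * s ^ ((d - 1) * (1 - 1/q)) := by
        rw [hP, ← Real.rpow_add hs]
        congr 1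
        field_simp
        ring
      have e2 : s ^ ((d - 1) * (1 - 1/q)) ≤ (1 + s) ^ ((d - 1) * (1 - 1/q)) :=
        Real.rpow_le_rpow hs.le (by linarith) (mul_nonneg (by linarith) h1q)
      have e3 : (1 + s) ^ ((d - 1) * (1 - 1/q)) * B = (1 + s) ^ (-(a / q)) := by
        rw [hB, ← Real.rpow_add hs1]
        congr 1
        rw [ha]
        field_simp
        ring
      have e4 : c ≤ (1 + s) ^ (a / q) * (1 + |u|) ^ (a / q) := by
        rw [hc, ← Real.mul_rpow hs1.le hu0.le]
        refine Real.rpow_le_rpow (by linarith) ?_ haq0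
        nlinarith [abs_nonneg u, neg_abs_le u]
      have e5 : A * (1 + |u|) ^ (a / q) = (1 + |u|) ^ (-(N - a / q)) := by
        rw [hA, ← Real.rpow_add hu0]
        congr 1
        ring
      have hA0 : 0 ≤ A := by rw [hA]; positivity
      have hB0 : 0 ≤ B := by rw [hB]; positivity
      have hc0 : 0 ≤ c := by rw [hc]; positivity
      have hP0 : 0 ≤ P := by rw [hP]; positivity
      calc A * s ^ (d - 1) * B * c
          = A * (P * s ^ ((d - 1) * (1 - 1/q))) * B * c := by rw [e1]
        _ ≤ A * (P * (1 + s) ^ ((d - 1) * (1 - 1/q))) * B * c := by gcongr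
        _ = (A * c) * (((1 + s) ^ ((d - 1) * (1 - 1/q)) * B) * P) := by ring
        _ = (A * c) * ((1 + s) ^ (-(a / q)) * P) := by rw [e3]
        _ ≤ (A * ((1 + s) ^ (a / q) * (1 + |u|) ^ (a / q))) *
              ((1 + s) ^ (-(a / q)) * P) := by
            have h2 : (0:ℝ) ≤ (1 + s) ^ (-(a / q)) := by positivity
            gcongr
        _ = (A * (1 + |u|) ^ (a / q)) * P * ((1 + s) ^ (a / q) * (1 + s) ^ (-(a / q))) := by
            ring
        _ = (A * (1 + |u|) ^ (a / q)) * P := by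
            rw [← Real.rpow_add hs1, add_neg_cancel, Real.rpow_zero, mul_one]
        _ = (1 + |u|) ^ (-(N - a / q)) * P := by rw [e5]
    calc A * m * s ^ (d - 1) * B * c = m * (A * s ^ (d - 1) * B * c) := by ring
      _ ≤ m * ((1 + |u|) ^ (-(N - a / q)) * P) := mul_le_mul_of_nonneg_left hXY hm
      _ = (1 + |u|) ^ (-(N - a / q)) * (m * P) := by ring
  · simp [hs]

/-- Hardy-type convolution estimate underlying the transplantation inequality:
for `d ≥ 1`, `1 ≤ q ≤ 2`, `N > (d-1)(1-q/2) + 1`, and any bounded `k : ℝ → ℂ`,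
`(∫₀^∞ (∫ (1+|u|)^{-N}|f(r+u)|(r+u)^{d-1}(1+|r+u|)^{-(d-1)/2} 1_{r+u>0} du)^q
  (1+r)^{(d-1)(1-q/2)} dr)^{1/q} ≤ C' ‖f‖_{L^q(s^{d-1}ds)}`. -/
theorem stmt_7 (d N q : ℝ) (hd : 1 ≤ d) (hq1 : 1 ≤ q) (hq2 : q ≤ 2)
    (hN : N > (d - 1) * (1 - q / 2) + 1) (k : ℝ → ℂ) (C : ℝ) (hk : ∀ x, ‖k x‖ ≤ C) :
    ∃ C' : ℝ, 0 < C' ∧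
      ∀ f : ℝ → ℝ, Measurable f →
        (∫⁻ r in Ioi (0 : ℝ),
            ((∫⁻ u : ℝ, ENNReal.ofReal
                ((1 + |u|) ^ (-N) * |f (r + u)| * (r + u) ^ (d - 1) *
                  (1 + |r + u|) ^ (-((d - 1) / 2)) *
                    (if 0 < r + u then 1 else 0))) ^ q *
              ENNReal.ofReal ((1 + r) ^ ((d - 1) * (1 - q / 2)))) ) ^ (1 / q)
          ≤ ENNReal.ofReal C' *
            (∫⁻ s in Ioi (0 : ℝ), ENNReal.ofReal (|f s| ^ q * s ^ (d - 1))) ^ (1 / q) := by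
  have hq0 : (0:ℝ) < q := by linarith
  set a : ℝ := (d - 1) * (1 - q / 2) with ha
  have ha0 : 0 ≤ a := mul_nonneg (by linarith) (by linarith)
  have haq0 : 0 ≤ a / q := div_nonneg ha0 hq0.le
  set β : ℝ := N - a / q with hβ
  have hβ1 : 1 < β := by
    have h : a / q ≤ a := by
      rw [div_le_iff₀ hq0]
      nlinarith
    simp only [hβ]; linarith
  set Φ : ℝ → ℝ≥0∞ := fun u => ENNReal.ofReal ((1 + |u|) ^ (-β)) with hΦ
  have mΦ : Measurable Φ := by
    apply Measurable.ennreal_ofReal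
    exact ((continuous_const.add continuous_abs).rpow_const
      (fun x => Or.inl (by positivity : (0:ℝ) < 1 + |x|).ne')).measurable
  have hΦint : ∫⁻ u, Φ u < ⊤ := by
    have hint : Integrable (fun u : ℝ => (1 + ‖u‖) ^ (-β)) :=
      integrable_one_add_norm (by simpa using hβ1)
    simpa [hΦ, Real.norm_eq_abs] using hint.lintegral_lt_top
  set C' : ℝ := max 1 (∫⁻ u, Φ u).toReal with hC'
  have hC'le : ∫⁻ u, Φ u ≤ ENNReal.ofReal C' := by
    rw [← ENNReal.ofReal_toReal hΦint.ne]
    exact ENNReal.ofReal_le_ofReal (le_max_right _ _)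
  have hC'1 : (1:ℝ) ≤ C' := le_max_left _ _
  have hcne0 : ENNReal.ofReal C' ≠ 0 := by
    simp only [ne_eq, ENNReal.ofReal_eq_zero, not_le]; linarith
  refine ⟨C', lt_of_lt_of_le one_pos hC'1, ?_⟩
  intro f hf
  set F : ℝ → ℝ≥0∞ := fun s =>
    ENNReal.ofReal (|f s| * s ^ ((d - 1) / q) * (if 0 < s then (1:ℝ) else 0)) with hF
  have mF : Measurable F := by
    apply Measurable.ennreal_ofReal
    apply Measurable.mul
    · exact (hf.abs).mul
        ((Real.continuous_rpow_const (div_nonneg (by linarith) hq0.le)).measurable.comp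
          measurable_id)
    · exact Measurable.ite measurableSet_Ioi measurable_const measurable_const
  have mFq : Measurable fun s => F s ^ q :=
    ENNReal.continuous_rpow_const.measurable.comp mF
  have mFu : Measurable fun p : ℝ × ℝ => Φ p.2 * F (p.1 + p.2) ^ q :=
    (mΦ.comp measurable_snd).mul (mFq.comp (measurable_fst.add measurable_snd))
  set G : ℝ → ℝ≥0∞ := fun r => ∫⁻ u, Φ u * F (r + u) with hG
  have mG : Measurable G := by
    apply Measurable.lintegral_prod_right
    exact (mΦ.comp measurable_snd).mul (mF.comp (measurable_fst.add measurable_snd))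
  have mGq : Measurable fun r => G r ^ q :=
    ENNReal.continuous_rpow_const.measurable.comp mG
  -- Step A: pointwise bound on (0,∞)
  have stepA : ∀ r ∈ Ioi (0:ℝ),
      (∫⁻ u : ℝ, ENNReal.ofReal
          ((1 + |u|) ^ (-N) * |f (r + u)| * (r + u) ^ (d - 1) *
            (1 + |r + u|) ^ (-((d - 1) / 2)) *
              (if 0 < r + u then 1 else 0))) ^ q *
        ENNReal.ofReal ((1 + r) ^ a) ≤ (G r) ^ q := by
    intro r hr
    rw [mem_Ioi] at hr
    have hc : ENNReal.ofReal ((1 + r) ^ a) = (ENNReal.ofReal ((1 + r) ^ (a / q))) ^ q := by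
      rw [ENNReal.ofReal_rpow_of_pos (by positivity),
        ← Real.rpow_mul (by positivity : (0:ℝ) ≤ 1 + r), div_mul_cancel₀ _ hq0.ne']
    rw [hc, ← ENNReal.mul_rpow_of_nonneg _ _ hq0.le]
    apply ENNReal.rpow_le_rpow _ hq0.le
    rw [← lintegral_mul_const' _ _ ENNReal.ofReal_ne_top]
    apply lintegral_mono
    intro u
    dsimp only
    have hbig : 0 ≤ (1 + |u|) ^ (-N) * |f (r + u)| * (r + u) ^ (d - 1) *
        (1 + |r + u|) ^ (-((d - 1) / 2)) * (if 0 < r + u then (1:ℝ) else 0) := by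
      by_cases hs : 0 < r + u
      · simp only [if_pos hs]
        have h1 : (0:ℝ) ≤ (r + u) ^ (d - 1) := Real.rpow_nonneg hs.le _
        positivity
      · simp [hs]
    rw [← ENNReal.ofReal_mul hbig, hΦ, hF, ← ENNReal.ofReal_mul (by positivity)]
    apply ENNReal.ofReal_le_ofReal
    exact stmt7_key d N q hd hq1 hq2 r u (|f (r + u)|) hr (abs_nonneg _)
  -- Step C: Hölder bound for each r
  have stepC : ∀ r : ℝ, (G r) ^ q ≤
      (∫⁻ u, Φ u) ^ (q - 1) * ∫⁻ u, Φ u * F (r + u) ^ q := by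
    intro r
    have hΦne : ∀ u, Φ u ≠ 0 ∧ Φ u ≠ ⊤ := by
      intro u
      refine ⟨?_, ENNReal.ofReal_ne_top⟩
      simp only [hΦ, ne_eq, ENNReal.ofReal_eq_zero, not_le]
      positivity
    have h1q : 0 ≤ 1 - 1/q := by
      have h : 1/q ≤ 1 := by rw [div_le_one hq0]; linarith
      linarith
    have hGr : G r = ∫⁻ u, Φ u ^ (1 - 1/q) * (Φ u * F (r + u) ^ q) ^ (1/q) := by
      apply lintegral_congr
      intro u
      rw [ENNReal.mul_rpow_of_nonneg _ _ (by positivity : (0:ℝ) ≤ 1/q),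
        ← ENNReal.rpow_mul, mul_one_div_cancel hq0.ne', ENNReal.rpow_one,
        ← mul_assoc, ← ENNReal.rpow_add _ _ (hΦne u).1 (hΦne u).2,
        sub_add_cancel, ENNReal.rpow_one]
    have mg : Measurable fun u => Φ u * F (r + u) ^ q :=
      mΦ.mul (mFq.comp (measurable_const.add measurable_id))
    have hH := ENNReal.lintegral_mul_norm_pow_le (μ := volume)
      (f := Φ) (g := fun u => Φ u * F (r + u) ^ q)
      mΦ.aemeasurable mg.aemeasurable
      h1q (by positivity : (0:ℝ) ≤ 1/q) (by ring)
    have hGle : G r ≤ (∫⁻ u, Φ u) ^ (1 - 1/q) * (∫⁻ u, Φ u * F (r + u) ^ q) ^ (1/q) := by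
      rw [hGr]
      exact hH
    calc (G r) ^ q
        ≤ ((∫⁻ u, Φ u) ^ (1 - 1/q) * (∫⁻ u, Φ u * F (r + u) ^ q) ^ (1/q)) ^ q :=
          ENNReal.rpow_le_rpow hGle hq0.le
      _ = (∫⁻ u, Φ u) ^ (q - 1) * ∫⁻ u, Φ u * F (r + u) ^ q := by
          rw [ENNReal.mul_rpow_of_nonneg _ _ hq0.le, ← ENNReal.rpow_mul,
            ← ENNReal.rpow_mul, one_div_mul_cancel hq0.ne', ENNReal.rpow_one]
          congr 2
          field_simp
  -- integrate stepC and use Tonelli + translation invariance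
  have hA : (∫⁻ r, (G r) ^ q) ≤
      (∫⁻ u, Φ u) ^ (q - 1) * ((∫⁻ u, Φ u) * ∫⁻ s, F s ^ q) := by
    have hne : (∫⁻ u, Φ u) ^ (q - 1) ≠ ⊤ :=
      ENNReal.rpow_ne_top_of_nonneg (by linarith) hΦint.ne
    calc (∫⁻ r, (G r) ^ q)
        ≤ ∫⁻ r, (∫⁻ u, Φ u) ^ (q - 1) * ∫⁻ u, Φ u * F (r + u) ^ q :=
          lintegral_mono stepC
      _ = (∫⁻ u, Φ u) ^ (q - 1) * ∫⁻ r, ∫⁻ u, Φ u * F (r + u) ^ q :=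
          lintegral_const_mul' _ _ hne
      _ = (∫⁻ u, Φ u) ^ (q - 1) * ∫⁻ u, ∫⁻ r, Φ u * F (r + u) ^ q := by
          rw [lintegral_lintegral_swap mFu.aemeasurable]
      _ = (∫⁻ u, Φ u) ^ (q - 1) * ∫⁻ u, Φ u * ∫⁻ r, F (r + u) ^ q := by
          congr 1
          exact lintegral_congr fun u => lintegral_const_mul' _ _ ENNReal.ofReal_ne_top
      _ = (∫⁻ u, Φ u) ^ (q - 1) * ∫⁻ u, Φ u * ∫⁻ s, F s ^ q := by
          congr 1
          refine lintegral_congr fun u => ?_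
          rw [lintegral_add_right_eq_self (fun s => F s ^ q) u]
      _ = (∫⁻ u, Φ u) ^ (q - 1) * ((∫⁻ u, Φ u) * ∫⁻ s, F s ^ q) :=
          congrArg _ (lintegral_mul_const _ mΦ)
  -- identify ∫ F^q with the right-hand side integral
  have hFq : (∫⁻ s, F s ^ q) =
      ∫⁻ s in Ioi (0:ℝ), ENNReal.ofReal (|f s| ^ q * s ^ (d - 1)) := by
    rw [← lintegral_indicator measurableSet_Ioi]
    refine lintegral_congr fun s => ?_
    by_cases hs : 0 < s
    · rw [indicator_of_mem (mem_Ioi.2 hs), hF]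
      simp only [if_pos hs, mul_one]
      rw [ENNReal.ofReal_rpow_of_nonneg (by positivity) hq0.le]
      congr 1
      rw [Real.mul_rpow (abs_nonneg _) (Real.rpow_nonneg hs.le _),
        ← Real.rpow_mul hs.le, div_mul_cancel₀ _ hq0.ne']
    · rw [indicator_of_notMem (by simpa using hs), hF]
      simp [hs, ENNReal.zero_rpow_of_pos hq0]
  have hq1' : (0:ℝ) ≤ 1 / q := by positivity
  have hfinal : ∀ X : ℝ≥0∞,
      ((ENNReal.ofReal C') ^ (q - 1) * (ENNReal.ofReal C' * X)) ^ (1 / q)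
        = ENNReal.ofReal C' * X ^ (1 / q) := by
    intro X
    have hpow : (ENNReal.ofReal C') ^ (q - 1) * ENNReal.ofReal C'
        = (ENNReal.ofReal C') ^ q := by
      have h := ENNReal.rpow_add (x := ENNReal.ofReal C') (q - 1) 1 hcne0
        ENNReal.ofReal_ne_top
      rw [ENNReal.rpow_one] at h
      rw [show q - 1 + 1 = q by ring] at h
      exact h.symm
    rw [← mul_assoc, hpow, ENNReal.mul_rpow_of_nonneg _ _ hq1', ← ENNReal.rpow_mul,
      mul_one_div_cancel hq0.ne', ENNReal.rpow_one]
  calc (∫⁻ r in Ioi (0 : ℝ),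
            ((∫⁻ u : ℝ, ENNReal.ofReal
                ((1 + |u|) ^ (-N) * |f (r + u)| * (r + u) ^ (d - 1) *
                  (1 + |r + u|) ^ (-((d - 1) / 2)) *
                    (if 0 < r + u then 1 else 0))) ^ q *
              ENNReal.ofReal ((1 + r) ^ a))) ^ (1 / q)
      ≤ (∫⁻ r in Ioi (0:ℝ), (G r) ^ q) ^ (1 / q) :=
        ENNReal.rpow_le_rpow (setLIntegral_mono mGq stepA) hq1'
    _ ≤ (∫⁻ r, (G r) ^ q) ^ (1 / q) :=
        ENNReal.rpow_le_rpow (setLIntegral_le_lintegral _ _) hq1'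
    _ ≤ ((∫⁻ u, Φ u) ^ (q - 1) * ((∫⁻ u, Φ u) * ∫⁻ s, F s ^ q)) ^ (1 / q) :=
        ENNReal.rpow_le_rpow hA hq1'
    _ ≤ ((ENNReal.ofReal C') ^ (q - 1) *
          (ENNReal.ofReal C' * ∫⁻ s, F s ^ q)) ^ (1 / q) := by
        apply ENNReal.rpow_le_rpow _ hq1'
        exact mul_le_mul' (ENNReal.rpow_le_rpow hC'le (by linarith))
          (mul_le_mul' hC'le le_rfl)
    _ = ENNReal.ofReal C' * (∫⁻ s, F s ^ q) ^ (1 / q) := hfinal _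
    _ = ENNReal.ofReal C' *
          (∫⁻ s in Ioi (0:ℝ), ENNReal.ofReal (|f s| ^ q * s ^ (d - 1))) ^ (1 / q) := by
        rw [hFq]
end

section
/- Let d > 1, 1 < p < 2d/(d+1), and let Ω(s) = (1+s)^{-(d-1)/2} restricted to the dyadic interval I_m = [2^m, 2^{m+1}]. Then Ω·1_{I_m} belongs to the Lorentz space L^{p',1}((0,∞), s^{d-1}ds) and ‖Ω 1_{I_m}‖_{L^{p',1}(μ_d)} ≤ C · min{2^{-m(d(1/p−1/2)−1/2)}, 2^{md/p'}} for all m ∈ ℤ, where 1/p + 1/p' = 1. -/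
open MeasureTheory Set Real

/-- The measure `dμ_d = s^{d-1} ds` on `(0,∞)`. -/
noncomputable def muD (d : ℝ) : Measure ℝ :=
  (volume.restrict (Ioi (0 : ℝ))).withDensity fun s => ENNReal.ofReal (s ^ (d - 1))

/-- The Lorentz `L^{q,1}(μ)` norm, in its distribution-function form
`‖f‖_{L^{q,1}(μ)} = ∫₀^∞ μ({s : |f(s)| > λ})^{1/q} dλ`. -/
noncomputable def lorentzOneNorm (μ : Measure ℝ) (f : ℝ → ℝ) (q : ℝ) : ENNReal :=
  ∫⁻ l in Ioi (0 : ℝ), (μ {s | l < |f s|}) ^ (1 / q)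

/-- For `d > 1`, `1 < p < 2d/(d+1)`, the function `Ω(s) = (1+s)^{-(d-1)/2}` restricted to
`I_m = [2^m, 2^{m+1}]` belongs to `L^{p',1}(μ_d)` with
`‖Ω 1_{I_m}‖_{L^{p',1}(μ_d)} ≤ C min{2^{-m(d(1/p-1/2)-1/2)}, 2^{md/p'}}` for all `m ∈ ℤ`. -/
theorem stmt_8 (d p : ℝ) (hd : 1 < d) (hp : 1 < p) (hp2 : p < 2 * d / (d + 1)) :
    ∃ C : ℝ, 0 < C ∧
      ∀ m : ℤ,
        lorentzOneNorm (muD d)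
            ((Icc ((2 : ℝ) ^ m) ((2 : ℝ) ^ (m + 1))).indicator
              fun s => (1 + s) ^ (-((d - 1) / 2))) (p / (p - 1)) < ⊤ ∧
        lorentzOneNorm (muD d)
            ((Icc ((2 : ℝ) ^ m) ((2 : ℝ) ^ (m + 1))).indicator
              fun s => (1 + s) ^ (-((d - 1) / 2))) (p / (p - 1))
          ≤ ENNReal.ofReal (C *
              min ((2 : ℝ) ^ (-(m : ℝ) * (d * (1 / p - 1 / 2) - 1 / 2)))
                ((2 : ℝ) ^ ((m : ℝ) * d * (1 - 1 / p)))) := by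
  have hp0 : (0:ℝ) < p := lt_trans one_pos hp
  have hp1 : (0:ℝ) < p - 1 := by linarith
  set r : ℝ := 1 - 1/p with hr_def
  have hr : 0 < r := by
    have h1 : 1/p < 1 := by rw [div_lt_one hp0]; exact hp
    simp only [hr_def]; linarith
  have hqr : 1 / (p/(p-1)) = r := by
    rw [one_div_div, hr_def]; field_simp
  refine ⟨(2:ℝ) ^ (d * r), Real.rpow_pos_of_pos two_pos _, fun m => ?_⟩
  set a : ℝ := (2:ℝ) ^ m with ha_def
  set b : ℝ := (2:ℝ) ^ (m+1) with hb_def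
  have ha : 0 < a := zpow_pos two_pos m
  have hb : 0 < b := zpow_pos two_pos (m+1)
  have hab : a ≤ b := by
    apply zpow_le_zpow_right₀ one_le_two; omega
  set A : ℝ := (1 + a) ^ (-((d-1)/2)) with hA_def
  have hA : 0 < A := Real.rpow_pos_of_pos (by linarith) _
  have he : -((d-1)/2) ≤ 0 := by linarith
  set F := (Icc a b).indicator fun s : ℝ => (1 + s) ^ (-((d - 1) / 2)) with hF_def
  have hFle : ∀ s, |F s| ≤ A := by
    intro s
    by_cases hs : s ∈ Icc a b
    · rw [hF_def, indicator_of_mem hs]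
      have h1 : (0:ℝ) < 1 + s := by have := hs.1; nlinarith
      rw [abs_of_nonneg (Real.rpow_nonneg h1.le _)]
      exact Real.rpow_le_rpow_of_nonpos (by linarith) (by linarith [hs.1]) he
    · rw [hF_def, indicator_of_notMem hs]; simpa using hA.le
  -- exponent bookkeeping : b as rpow
  have hbr : b = (2:ℝ) ^ ((m:ℝ)+1) := by
    rw [hb_def, ← Real.rpow_intCast]; push_cast; ring_nf
  have har : a = (2:ℝ) ^ (m:ℝ) := (Real.rpow_intCast 2 m).symm
  -- measure bound
  have hmu : muD d (Icc a b) ≤ ENNReal.ofReal ((2:ℝ) ^ (((m:ℝ)+1) * d)) := by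
    have hsub : Icc a b ⊆ Ioi (0:ℝ) := fun x hx => lt_of_lt_of_le ha hx.1
    have h1 : muD d (Icc a b)
        = ∫⁻ s in Icc a b, ENNReal.ofReal (s ^ (d-1)) := by
      rw [muD, withDensity_apply _ measurableSet_Icc,
        Measure.restrict_restrict measurableSet_Icc, inter_eq_left.mpr hsub]
    rw [h1]
    calc ∫⁻ s in Icc a b, ENNReal.ofReal (s ^ (d-1))
        ≤ ∫⁻ _ in Icc a b, ENNReal.ofReal (b ^ (d-1)) := by
          apply setLIntegral_mono measurable_const
          intro s hs
          exact ENNReal.ofReal_le_ofReal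
            (Real.rpow_le_rpow (le_of_lt (lt_of_lt_of_le ha hs.1)) hs.2 (by linarith))
      _ = ENNReal.ofReal (b ^ (d-1)) * ENNReal.ofReal (b - a) := by
          rw [setLIntegral_const, Real.volume_Icc]
      _ ≤ ENNReal.ofReal ((2:ℝ) ^ (((m:ℝ)+1) * d)) := by
          rw [← ENNReal.ofReal_mul (Real.rpow_nonneg hb.le _)]
          apply ENNReal.ofReal_le_ofReal
          have h2 : b ^ (d-1) * (b - a) ≤ b ^ (d-1) * b :=
            mul_le_mul_of_nonneg_left (by linarith) (Real.rpow_nonneg hb.le _)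
          have h3 : b ^ (d-1) * b = b ^ d := by
            nth_rewrite 2 [show b = b ^ (1:ℝ) by rw [Real.rpow_one]]
            rw [← Real.rpow_add hb]; norm_num
          have h4 : b ^ d = (2:ℝ) ^ (((m:ℝ)+1) * d) := by
            rw [hbr, ← Real.rpow_mul (by norm_num)]
          linarith [h2, h3.le, h4.le]
  -- main pointwise/integral bound
  have key : lorentzOneNorm (muD d) F (p/(p-1))
      ≤ (muD d (Icc a b)) ^ r * ENNReal.ofReal A := by
    rw [lorentzOneNorm, hqr]
    calc ∫⁻ l in Ioi (0:ℝ), (muD d {s | l < |F s|}) ^ r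
        ≤ ∫⁻ l in Ioi (0:ℝ), (Iio A).indicator (fun _ => (muD d (Icc a b)) ^ r) l := by
          apply setLIntegral_mono (measurable_const.indicator measurableSet_Iio)
          intro l hl
          by_cases hlA : l < A
          · rw [indicator_of_mem (show l ∈ Iio A from hlA)]
            apply ENNReal.rpow_le_rpow _ hr.le
            apply measure_mono
            intro s hs
            simp only [mem_setOf_eq] at hs
            by_contra hsn
            rw [hF_def, indicator_of_notMem hsn] at hs
            simp only [abs_zero] at hs
            exact absurd hs (not_lt.mpr (le_of_lt hl))
          · rw [indicator_of_notMem (by simpa using hlA)]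
            have hempty : {s | l < |F s|} = (∅ : Set ℝ) := by
              ext s
              simp only [mem_setOf_eq, mem_empty_iff_false, iff_false, not_lt]
              exact (hFle s).trans (not_lt.mp hlA)
            rw [hempty]
            simp [ENNReal.zero_rpow_of_pos hr]
      _ = (muD d (Icc a b)) ^ r * ENNReal.ofReal A := by
          rw [lintegral_indicator measurableSet_Iio, setLIntegral_const,
            Measure.restrict_apply measurableSet_Iio, Set.Iio_inter_Ioi,
            Real.volume_Ioo, sub_zero]
  have hbound : lorentzOneNorm (muD d) F (p/(p-1))
      ≤ ENNReal.ofReal ((2:ℝ) ^ ((((m:ℝ)+1) * d) * r) * A) := by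
    refine key.trans ?_
    rw [ENNReal.ofReal_mul (Real.rpow_nonneg (by norm_num) _),
      Real.rpow_mul (by norm_num : (0:ℝ) ≤ 2),
      ← ENNReal.ofReal_rpow_of_pos (Real.rpow_pos_of_pos two_pos _)]
    exact mul_le_mul_left (ENNReal.rpow_le_rpow hmu hr.le) _
  have hreal : (2:ℝ) ^ ((((m:ℝ)+1) * d) * r) * A
      ≤ (2:ℝ) ^ (d * r) *
        min ((2 : ℝ) ^ (-(m : ℝ) * (d * (1 / p - 1 / 2) - 1 / 2)))
          ((2 : ℝ) ^ ((m : ℝ) * d * r)) := by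
    have hsplit : (2:ℝ) ^ ((((m:ℝ)+1) * d) * r)
        = (2:ℝ) ^ (d * r) * (2:ℝ) ^ ((m:ℝ) * d * r) := by
      rw [← Real.rpow_add two_pos]; ring_nf
    rw [hsplit, mul_assoc]
    apply mul_le_mul_of_nonneg_left _ (Real.rpow_nonneg (by norm_num) _)
    apply le_min
    · -- use A ≤ a ^ (-(d-1)/2)
      have hA2 : A ≤ (2:ℝ) ^ ((m:ℝ) * (-((d-1)/2))) := by
        rw [hA_def]
        calc (1 + a) ^ (-((d-1)/2)) ≤ a ^ (-((d-1)/2)) :=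
              Real.rpow_le_rpow_of_nonpos ha (by linarith) he
          _ = (2:ℝ) ^ ((m:ℝ) * (-((d-1)/2))) := by
              rw [har, ← Real.rpow_mul (by norm_num)]
      have h5 := mul_le_mul_of_nonneg_left hA2
        (Real.rpow_nonneg (by norm_num : (0:ℝ) ≤ 2) ((m:ℝ) * d * r))
      refine h5.trans ?_
      rw [← Real.rpow_add two_pos]
      apply le_of_eq
      congr 1
      rw [hr_def]; ring
    · have hA1 : A ≤ 1 := by
        rw [hA_def]
        exact Real.rpow_le_one_of_one_le_of_nonpos (by linarith) he
      calc (2:ℝ) ^ ((m:ℝ) * d * r) * A ≤ (2:ℝ) ^ ((m:ℝ) * d * r) * 1 :=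
            mul_le_mul_of_nonneg_left hA1 (Real.rpow_nonneg (by norm_num) _)
        _ = (2:ℝ) ^ ((m:ℝ) * d * r) := mul_one _
  have hfinal : lorentzOneNorm (muD d) F (p/(p-1))
      ≤ ENNReal.ofReal ((2:ℝ) ^ (d * r) *
        min ((2 : ℝ) ^ (-(m : ℝ) * (d * (1 / p - 1 / 2) - 1 / 2)))
          ((2 : ℝ) ^ ((m : ℝ) * d * r))) :=
    hbound.trans (ENNReal.ofReal_le_ofReal hreal)
  exact ⟨lt_of_le_of_lt hfinal ENNReal.ofReal_lt_top, hfinal⟩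
end
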